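/- Let T be a finite tree with labeling l : V(T) → [0,∞) such that max{l(u),l(v)} > 0 for every edge {u,v}, and let d_l be the associated ultrametric on V(T). Then for every ball B of (V(T), d_l) with |B| ≥ 2, there exists a point z ∈ B such that d_l(z,t) = diam B for all t ∈ B \ {z}. -/

import Mathlib

/-- An ultrametric on a type `X`. -/
def IsUltrametricOn {X : Type*} (d : X → X → ℝ) : Prop :=
  (∀ x y, 0 ≤ d x y) ∧ (∀ x y, d x y = d y x) ∧ (∀ x y, d x y = 0 ↔ x = y) ∧
    ∀ x y z, d x y ≤ max (d x z) (d z y)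

/-- The ballean of `(X,d)`: the set of all closed balls, viewed as subsets of `X`. -/
def ballean {X : Type*} (d : X → X → ℝ) : Set (Set X) :=
  {B | ∃ c r, 0 ≤ r ∧ B = {x | d x c ≤ r}}

/-- The diameter of a subset `B`: the supremum of distances between points of `B`. -/
noncomputable def setDiam {X : Type*} (d : X → X → ℝ) (B : Set X) : ℝ :=
  sSup {r | ∃ x ∈ B, ∃ y ∈ B, d x y = r}

/-- Let `T` be a finite tree with nonnegative labeling `l` satisfying
`max (l u) (l v) > 0` for every edge, and let `D = d_l` be the associated ultrametric
(max label over the unique joining path). Then every ball `B` with `|B| ≥ 2` contains a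
point `z` with `D z t = diam B` for all `t ∈ B \ {z}`. -/
theorem labeled_tree_ball_has_diametrical_point {V : Type*} [Fintype V]
    (G : SimpleGraph V) (hT : G.IsTree) (l : V → ℝ) (hl : ∀ v, 0 ≤ l v)
    (hedge : ∀ u v, G.Adj u v → 0 < max (l u) (l v)) (D : V → V → ℝ)
    (hD0 : ∀ u, D u u = 0)
    (hDpath : ∀ u v, u ≠ v → ∀ p : G.Walk u v, p.IsPath →
      (D u v : WithBot ℝ) = (p.support.map l).maximum)
    (hD : IsUltrametricOn D) (B : Set V) (hB : B ∈ ballean D) (hB2 : 2 ≤ B.ncard) :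
    ∃ z ∈ B, ∀ t ∈ B, t ≠ z → D z t = setDiam D B := by
  classical
  obtain ⟨hpos, hsymm, heq0, hmax⟩ := hD
  obtain ⟨c, r, hr, rfl⟩ := hB
  set B : Set V := {x | D x c ≤ r} with hBdef
  -- choose a diametral pair
  have hBfin : B.Finite := Set.toFinite _
  obtain ⟨a0, ha0, b0, hb0, hab0⟩ := (Set.one_lt_ncard hBfin).1 (by omega)
  have hBne : B.Nonempty := ⟨a0, ha0⟩
  obtain ⟨⟨x, y⟩, hxy, hgr⟩ :=
    Set.Finite.exists_maximalFor (fun p : V × V => D p.1 p.2) (B ×ˢ B)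
      (hBfin.prod hBfin) (hBne.prod hBne)
  set M := D x y with hM
  have hxB : x ∈ B := hxy.1
  have hyB : y ∈ B := hxy.2
  have hub : ∀ a ∈ B, ∀ b ∈ B, D a b ≤ M := by
    intro a ha b hb
    by_contra h
    push_neg at h
    exact absurd (hgr (j := (a, b)) ⟨ha, hb⟩ h.le) (not_le.mpr h)
  -- M > 0
  have hMpos : 0 < M := by
    have h1 : 0 ≤ D a0 b0 := hpos a0 b0
    have h2 : D a0 b0 ≠ 0 := fun h => hab0 ((heq0 a0 b0).1 h)
    exact lt_of_lt_of_le (lt_of_le_of_ne h1 (Ne.symm h2)) (hub a0 ha0 b0 hb0)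
  have hxyne : x ≠ y := by
    intro h; rw [h, hD0] at hM; exact lt_irrefl _ (hM ▸ hMpos)
  -- setDiam = M
  have hdiam : setDiam D B = M := by
    apply IsGreatest.csSup_eq
    constructor
    · exact ⟨x, hxB, y, hyB, rfl⟩
    · rintro s ⟨a, ha, b, hb, rfl⟩; exact hub a ha b hb
  -- M ≤ r
  have hMr : M ≤ r := le_trans (hmax x y c) (max_le hxB (by rw [hsymm]; exact hyB))
  -- path from x to y, vertex w achieving max label
  obtain ⟨p, hp, -⟩ := hT.existsUnique_path x y
  have hmaxeq : (M : WithBot ℝ) = (p.support.map l).maximum := hDpath x y hxyne p hp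
  have hmem : (M : WithBot ℝ) ∈ (p.support.map l).map WithBot.some := by
    have : ((p.support.map l).maximum) = ((M : ℝ) : WithBot ℝ) := hmaxeq.symm
    have := List.maximum_mem (l := p.support.map l) (m := M) this
    simpa using this
  obtain ⟨w, hwsup, hlw⟩ : ∃ w ∈ p.support, l w = M := by
    simp only [List.map_map, List.mem_map, Function.comp] at hmem
    obtain ⟨w, hw, hweq⟩ := hmem
    exact ⟨w, hw, by exact_mod_cast hweq⟩
  -- D x w ≤ M
  have hDxw : D x w ≤ M := by
    rcases eq_or_ne x w with rfl | hne
    · rw [hD0]; exact hMpos.le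
    · have hq := hp.takeUntil hwsup
      have := hDpath x w hne (p.takeUntil w hwsup) hq
      have hle : ((p.takeUntil w hwsup).support.map l).maximum ≤ (p.support.map l).maximum := by
        apply List.maximum_le_of_forall_le
        intro a ha
        simp only [List.mem_map] at ha
        obtain ⟨u, hu, rfl⟩ := ha
        exact List.le_maximum_of_mem' (List.mem_map_of_mem (f := l)
          (p.support_takeUntil_subset hwsup hu))
      rw [← hmaxeq] at hle
      exact_mod_cast this ▸ hle
  -- w ∈ B
  have hwB : w ∈ B := by
    have := hmax w c x
    exact le_trans this (max_le (le_trans (by rw [hsymm]; exact hDxw) hMr) hxB)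
  refine ⟨w, hwB, fun t ht htw => ?_⟩
  rw [hdiam]
  refine le_antisymm ?_ ?_
  · rw [hsymm]; exact hub t ht w hwB
  · -- M = l w ≤ D w t
    obtain ⟨q, hq, -⟩ := hT.existsUnique_path w t
    have := hDpath w t (Ne.symm htw) q hq
    have hle : (l w : WithBot ℝ) ≤ (q.support.map l).maximum :=
      List.le_maximum_of_mem' (List.mem_map_of_mem (f := l) q.start_mem_support)
    rw [← this, hlw] at hle
    exact_mod_cast hle
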